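/- Let α ∈ (0,1/2], and let e : [0,∞) → [0,∞) be a nonincreasing C¹ function with e(t) → 0, satisfying e(t)^{1−α} ≤ C √(−e'(t)) for all t with e(t) > 0, where C > 0. Then ∫_0^∞ √(−e'(t)) dt < ∞. -/

import Mathlib

open MeasureTheory Set intervalIntegral

/-- Abstract Łojasiewicz decay lemma: if `e : [0,∞) → [0,∞)` is `C¹`, nonincreasing,
tends to `0`, and satisfies `e(t)^{1−α} ≤ C √(−e'(t))` wherever `e(t) > 0`, with
`α ∈ (0,1/2]` and `C > 0`, then `∫_0^∞ √(−e'(t)) dt < ∞`. -/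
theorem lojasiewicz_decay_integrable
    (α C : ℝ) (hα : α ∈ Set.Ioc (0 : ℝ) (1 / 2)) (hC : 0 < C)
    (e : ℝ → ℝ) (he : ContDiff ℝ 1 e)
    (hnonneg : ∀ t, 0 ≤ t → 0 ≤ e t)
    (hmono : AntitoneOn e (Set.Ici 0))
    (hlim : Filter.Tendsto e Filter.atTop (nhds 0))
    (hLoj : ∀ t, 0 ≤ t → 0 < e t → e t ^ (1 - α) ≤ C * Real.sqrt (-(deriv e t))) :
    IntegrableOn (fun t => Real.sqrt (-(deriv e t))) (Set.Ici 0) := by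
  obtain ⟨hα0, hα2⟩ := hα
  set f : ℝ → ℝ := fun t => Real.sqrt (-(deriv e t)) with hf
  have hde : Continuous (deriv e) := he.continuous_deriv le_rfl
  have hfc : Continuous f := (hde.neg).sqrt
  have hfint : ∀ a b : ℝ, IntervalIntegrable f volume a b := fun a b =>
    hfc.intervalIntegrable a b
  set M : ℝ := C / α * e 0 ^ α with hM
  have hM0 : 0 ≤ M := mul_nonneg (div_pos hC hα0).le (Real.rpow_nonneg (hnonneg 0 le_rfl) _)
  -- Lemma A : bound when e b > 0
  have lemA : ∀ b : ℝ, 0 ≤ b → 0 < e b → (∫ t in (0:ℝ)..b, f t) ≤ M := by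
    intro b hb0 heb
    have hepos : ∀ t ∈ Icc (0:ℝ) b, 0 < e t := fun t ht =>
      lt_of_lt_of_le heb (hmono ht.1 hb0 ht.2)
    set g : ℝ → ℝ := fun t => e t ^ α with hg
    set g' : ℝ → ℝ := fun t => deriv e t * α * e t ^ (α - 1) with hg'
    have hderiv : ∀ t ∈ uIcc (0:ℝ) b, HasDerivAt g (g' t) t := by
      intro t ht
      rw [uIcc_of_le hb0] at ht
      exact ((he.differentiable one_ne_zero t).hasDerivAt).rpow_const
        (Or.inl (hepos t ht).ne')
    have hg'cont : ContinuousOn g' (uIcc (0:ℝ) b) := by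
      apply ((hde.continuousOn).mul continuousOn_const).mul
      exact (he.continuous.continuousOn).rpow_const fun t ht => by
        rw [uIcc_of_le hb0] at ht; exact Or.inl (hepos t ht).ne'
    have hg'int : IntervalIntegrable g' volume 0 b := hg'cont.intervalIntegrable
    have hftc : (∫ t in (0:ℝ)..b, g' t) = g b - g 0 :=
      integral_eq_sub_of_hasDerivAt hderiv hg'int
    have hpt : ∀ t ∈ Icc (0:ℝ) b, f t ≤ C / α * (-(g' t)) := by
      intro t ht
      have hE : 0 < e t := hepos t ht
      have h1 := hLoj t ht.1 hE
      have hE1 : 0 < e t ^ (1 - α) := Real.rpow_pos_of_pos hE _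
      have hs : 0 < Real.sqrt (-(deriv e t)) := by
        rcases lt_or_ge 0 (Real.sqrt (-(deriv e t))) with h | h
        · exact h
        · nlinarith
      have hp : 0 < -(deriv e t) := Real.sqrt_pos.mp hs
      have hsq : Real.sqrt (-(deriv e t)) ^ 2 = -(deriv e t) := Real.sq_sqrt hp.le
      have hEa : 0 < e t ^ (α - 1) := Real.rpow_pos_of_pos hE _
      have hprod : e t ^ (α - 1) * e t ^ (1 - α) = 1 := by
        rw [← Real.rpow_add hE]; norm_num
      have hrw : C / α * (-(g' t)) = C * (-(deriv e t)) * e t ^ (α - 1) := by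
        simp only [hg']; field_simp
      rw [hrw]
      have expand : C * (-(deriv e t)) * e t ^ (α - 1) - Real.sqrt (-(deriv e t))
          = Real.sqrt (-(deriv e t)) * e t ^ (α - 1)
            * (C * Real.sqrt (-(deriv e t)) - e t ^ (1 - α)) := by
        linear_combination (-(C * e t ^ (α - 1) * hsq)) + Real.sqrt (-(deriv e t)) * hprod
      have h0 : 0 ≤ C * (-(deriv e t)) * e t ^ (α - 1) - Real.sqrt (-(deriv e t)) := by
        rw [expand]
        exact mul_nonneg (mul_nonneg hs.le hEa.le) (sub_nonneg.mpr h1)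
      simp only [hf]
      linarith
    calc (∫ t in (0:ℝ)..b, f t) ≤ ∫ t in (0:ℝ)..b, C / α * (-(g' t)) :=
          integral_mono_on hb0 (hfint 0 b) ((hg'int.neg).const_mul _) hpt
      _ = C / α * (g 0 - g b) := by
          rw [intervalIntegral.integral_const_mul, intervalIntegral.integral_neg, hftc]; ring
      _ ≤ M := by
          have hgb : 0 ≤ g b := Real.rpow_nonneg (hnonneg b hb0) _
          have : g 0 - g b ≤ e 0 ^ α := by simp only [hg]; linarith
          have hCα : 0 ≤ C / α := (div_pos hC hα0).le
          calc C / α * (g 0 - g b) ≤ C / α * (e 0 ^ α) := by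
                exact mul_le_mul_of_nonneg_left this hCα
            _ = M := rfl
  -- zero derivative at interior zeros
  have hzero : ∀ t : ℝ, 0 < t → e t = 0 → f t = 0 := by
    intro t ht het
    have hmin : IsLocalMin e t := by
      filter_upwards [Ioi_mem_nhds ht] with s hs
      rw [het]; exact hnonneg s (le_of_lt hs)
    have : deriv e t = 0 := hmin.deriv_eq_zero
    simp [hf, this]
  -- the uniform bound for all b ≥ 0
  have hbound : ∀ b : ℝ, 0 ≤ b → (∫ t in (0:ℝ)..b, f t) ≤ M := by
    intro b hb0
    rcases lt_or_eq_of_le (hnonneg b hb0) with heb | heb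
    · exact lemA b hb0 heb
    · -- e b = 0
      set S : Set ℝ := {t | 0 ≤ t ∧ e t = 0} with hS
      have hSne : S.Nonempty := ⟨b, hb0, heb.symm⟩
      have hSbdd : BddBelow S := ⟨0, fun x hx => hx.1⟩
      have hSclosed : IsClosed S := by
        have : S = Ici 0 ∩ e ⁻¹' {0} := by
          ext x; exact Iff.rfl
        rw [this]
        exact isClosed_Ici.inter (isClosed_singleton.preimage he.continuous)
      set T : ℝ := sInf S with hT
      have hTS : T ∈ S := hSclosed.csInf_mem hSne hSbdd
      have hT0 : 0 ≤ T := hTS.1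
      have heT : e T = 0 := hTS.2
      have hTb : T ≤ b := csInf_le hSbdd ⟨hb0, heb.symm⟩
      have hfz : ∀ t : ℝ, T < t → f t = 0 := by
        intro t ht
        have ht0 : 0 < t := lt_of_le_of_lt hT0 ht
        have het : e t = 0 :=
          le_antisymm (heT ▸ hmono hT0 ht0.le ht.le) (hnonneg t ht0.le)
        exact hzero t ht0 het
      have hsplit : (∫ t in (0:ℝ)..b, f t)
          = (∫ t in (0:ℝ)..T, f t) + ∫ t in T..b, f t :=
        (integral_add_adjacent_intervals (hfint 0 T) (hfint T b)).symm
      have hzero2 : (∫ t in T..b, f t) = 0 := by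
        rw [integral_of_le hTb]
        exact setIntegral_eq_zero_of_forall_eq_zero fun x hx => hfz x hx.1
      rw [hsplit, hzero2, add_zero]
      -- now bound ∫ 0..T
      rcases eq_or_lt_of_le hT0 with hT0' | hT0'
      · rw [← hT0']; simp [hM0]
      · -- T > 0 : e > 0 on [0,T), use continuity of primitive
        have hFs : ∀ s ∈ Ico (0:ℝ) T, (∫ t in (0:ℝ)..s, f t) ≤ M := by
          intro s hs
          have hes : 0 < e s := by
            rcases lt_or_eq_of_le (hnonneg s hs.1) with h | h
            · exact h
            · exact absurd (csInf_le hSbdd ⟨hs.1, h.symm⟩) (not_le.mpr hs.2)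
          exact lemA s hs.1 hes
        have hFcont : Continuous fun b => ∫ t in (0:ℝ)..b, f t :=
          intervalIntegral.continuous_primitive (fun a b => hfint a b) 0
        have htend : Filter.Tendsto (fun s => ∫ t in (0:ℝ)..s, f t)
            (nhdsWithin T (Iio T)) (nhds (∫ t in (0:ℝ)..T, f t)) :=
          (hFcont.tendsto T).mono_left nhdsWithin_le_nhds
        refine le_of_tendsto htend ?_
        filter_upwards [Ioo_mem_nhdsLT_of_mem ⟨hT0', le_rfl⟩] with s hs
        exact hFs s ⟨hs.1.le, hs.2⟩
  -- conclude
  rw [← Set.Ioi_union_left, integrableOn_union]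
  constructor
  · apply integrableOn_Ioi_of_intervalIntegral_norm_bounded M 0
      (fun i : ℕ => (hfint 0 i).1) tendsto_natCast_atTop_atTop
    filter_upwards with i
    have : (∫ x in (0:ℝ)..(i:ℝ), ‖f x‖) = ∫ x in (0:ℝ)..(i:ℝ), f x := by
      apply intervalIntegral.integral_congr
      intro x _; exact Real.norm_of_nonneg (Real.sqrt_nonneg _)
    rw [this]
    exact hbound i (Nat.cast_nonneg i)
  · exact (integrableOn_singleton_iff (by simp)).mpr (Or.inr (by simp))
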